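/- (Carlson) For every meager set F ⊆ 2^ω there exists a meager set F' ⊆ 2^ω such that for all x₁, x₂ ∈ 2^ω there exists x ∈ 2^ω with ((2^ω \ F') + x₁) ∪ ((2^ω \ F') + x₂) ⊆ (2^ω \ F) + x. -/

import Mathlib

open Set

local notation "Ω" => (ℕ → ZMod 2)

lemma open_prefix {U : Set Ω} (hU : IsOpen U) {u : Ω} (hu : u ∈ U) :
    ∃ N, ∀ v : Ω, (∀ i < N, v i = u i) → v ∈ U := by
  rw [isOpen_pi_iff] at hU
  obtain ⟨I, t, h1, h2⟩ := hU u hu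
  refine ⟨(I.sup id) + 1, fun v hv => h2 ?_⟩
  intro i hi
  rw [hv i (Nat.lt_succ_of_le (Finset.le_sup (f := id) hi))]
  exact (h1 i hi).2

lemma interval_open (a b : ℕ) (σ : Ω) :
    IsOpen {v : Ω | ∀ i, a ≤ i → i < b → v i = σ i} := by
  have : {v : Ω | ∀ i, a ≤ i → i < b → v i = σ i}
      = ⋂ i ∈ Finset.Ico a b, (fun v : Ω => v i) ⁻¹' {σ i} := by
    ext v
    simp [Finset.mem_Ico]
  rw [this]
  exact isOpen_biInter_finset fun i _ =>
    (continuous_apply i).isOpen_preimage _ (isOpen_discrete _)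

lemma step_one {C : Set Ω} (hC : IsClosed C) (hInt : interior C = ∅)
    (a : ℕ) (σ : Ω) :
    ∃ (b : ℕ) (t : Ω), a < b ∧ ∀ x : Ω, (∀ i < a, x i = σ i) →
      (∀ i, a ≤ i → i < b → x i = t i) → x ∉ C := by
  have hdense : Dense Cᶜ := interior_eq_empty_iff_dense_compl.mp hInt
  have hcyl : IsOpen {v : Ω | ∀ i, 0 ≤ i → i < a → v i = σ i} := interval_open 0 a σ
  obtain ⟨u, hu1, hu2⟩ := hdense.inter_open_nonempty _ hcyl ⟨σ, fun i _ _ => rfl⟩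
  obtain ⟨N, hN⟩ := open_prefix hC.isOpen_compl hu2
  refine ⟨max N (a + 1), u, lt_max_of_lt_right (Nat.lt_succ_self a), ?_⟩
  intro x hpre hseg
  apply hN x
  intro i hi
  by_cases hia : i < a
  · rw [hpre i hia, hu1 i (Nat.zero_le i) hia]
  · exact hseg i (Nat.le_of_not_lt hia) (lt_of_lt_of_le hi (le_max_left _ _))

lemma step_list {C : Set Ω} (hC : IsClosed C) (hInt : interior C = ∅) (a : ℕ) :
    ∀ L : List Ω, ∃ (b : ℕ) (t : Ω), a < b ∧ ∀ x : Ω, (∀ i, a ≤ i → i < b → x i = t i) →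
      (∃ σ ∈ L, ∀ i < a, x i = σ i) → x ∉ C := by
  intro L
  induction L with
  | nil =>
    exact ⟨a + 1, fun _ => 0, Nat.lt_succ_self a, by rintro x _ ⟨σ, h, -⟩; simp at h⟩
  | cons σ L ih =>
    obtain ⟨b, t, hab, hL⟩ := ih
    obtain ⟨b', t', hbb', h1⟩ := step_one hC hInt b (fun i => if i < a then σ i else t i)
    refine ⟨b', fun i => if i < b then t i else t' i, lt_trans hab hbb', ?_⟩
    intro x hx hmem
    obtain ⟨τ, hτ, hpre⟩ := hmem
    rcases List.mem_cons.mp hτ with h | h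
    · subst h
      refine h1 x ?_ ?_
      · intro i hib
        by_cases hia : i < a
        · simpa [hia] using hpre i hia
        · have := hx i (Nat.le_of_not_lt hia) (lt_trans hib hbb')
          simpa [hia, hib] using this
      · intro i hbi hib'
        have := hx i (le_trans hab.le hbi) hib'
        simpa [Nat.not_lt.mpr hbi] using this
    · refine hL x ?_ ⟨τ, h, hpre⟩
      intro i h1' h2'
      have := hx i h1' (h2'.trans hbb')
      simpa [h2'] using this

lemma step_all {C : Set Ω} (hC : IsClosed C) (hInt : interior C = ∅) (a : ℕ) :
    ∃ (b : ℕ) (t : Ω), a < b ∧ ∀ x : Ω, (∀ i, a ≤ i → i < b → x i = t i) → x ∉ C := by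
  obtain ⟨b, t, hab, h⟩ := step_list hC hInt a
    ((Finset.univ : Finset (Fin a → ZMod 2)).toList.map
      (fun σ i => if h : i < a then σ ⟨i, h⟩ else 0))
  refine ⟨b, t, hab, fun x hx => h x hx
    ⟨(fun (σ : Fin a → ZMod 2) (i : ℕ) => if h : i < a then σ ⟨i, h⟩ else 0)
      (fun j : Fin a => x j), ?_, ?_⟩⟩
  · exact List.mem_map.mpr ⟨fun j => x j, Finset.mem_toList.mpr (Finset.mem_univ _), rfl⟩
  · intro i hi
    simp [hi]

lemma nwd_union {X : Type*} [TopologicalSpace X] {s t : Set X}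
    (hs : IsNowhereDense s) (ht : IsNowhereDense t) : IsNowhereDense (s ∪ t) := by
  rw [IsNowhereDense, closure_union]
  rw [IsNowhereDense] at hs ht
  set U := interior (closure s ∪ closure t) with hU_def
  have hU : IsOpen U := isOpen_interior
  have h1 : U \ closure s ⊆ interior (closure t) :=
    interior_maximal (fun z hz => (interior_subset hz.1).resolve_left hz.2)
      (hU.sdiff isClosed_closure)
  have h2 : U \ closure s = ∅ := subset_empty_iff.mp (ht ▸ h1)
  have h3 : U ⊆ closure s := diff_eq_empty.mp h2
  have h4 : U ⊆ interior (closure s) := interior_maximal h3 hU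
  exact subset_empty_iff.mp (hs ▸ h4)

lemma nwd_finset_biUnion {g : ℕ → Set Ω} (hg : ∀ n, IsNowhereDense (g n)) (s : Finset ℕ) :
    IsNowhereDense (⋃ m ∈ s, g m) := by
  classical
  induction s using Finset.induction with
  | empty => simp
  | insert _ _ h ih =>
    rw [Finset.set_biUnion_insert]
    exact nwd_union (hg _) ih

theorem stmt_3 (F : Set (ℕ → ZMod 2)) (hF : IsMeagre F) :
    ∃ F' : Set (ℕ → ZMod 2), IsMeagre F' ∧
      ∀ x₁ x₂ : ℕ → ZMod 2, ∃ x : ℕ → ZMod 2,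
        ((· + x₁) '' F'ᶜ) ∪ ((· + x₂) '' F'ᶜ) ⊆ (· + x) '' Fᶜ := by
  classical
  obtain ⟨S, hS_nwd, hS_cnt, hS_cov⟩ := isMeagre_iff_countable_union_isNowhereDense.mp hF
  obtain ⟨g, hg⟩ := (hS_cnt.insert ∅).exists_eq_range ⟨∅, mem_insert _ _⟩
  have hg_nwd : ∀ n, IsNowhereDense (g n) := by
    intro n
    have : g n ∈ insert (∅ : Set Ω) S := hg ▸ mem_range_self n
    rcases this with h | h
    · rw [h]; exact isNowhereDense_empty
    · exact hS_nwd _ h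
  set C : ℕ → Set Ω := fun n => closure (⋃ m ∈ Finset.range (n+1), g m) with hC_def
  have hC_closed : ∀ n, IsClosed (C n) := fun n => isClosed_closure
  have hC_int : ∀ n, interior (C n) = ∅ := fun n =>
    ((hC_closed n).isNowhereDense_iff).mp (nwd_finset_biUnion hg_nwd _).closure
  have hg_sub : ∀ m n, m ≤ n → g m ⊆ C n := by
    intro m n h
    exact (subset_biUnion_of_mem (u := fun m => g m)
      (Finset.mem_range.mpr (by omega))).trans subset_closure
  have key : ∀ n a, ∃ p : ℕ × Ω, a < p.1 ∧
      ∀ x : Ω, (∀ i, a ≤ i → i < p.1 → x i = p.2 i) → x ∉ C n := by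
    intro n a
    obtain ⟨b, t, h1, h2⟩ := step_all (hC_closed n) (hC_int n) a
    exact ⟨(b, t), h1, h2⟩
  choose f hf1 hf2 using key
  obtain ⟨k, hk0, hk_succ⟩ : ∃ k : ℕ → ℕ, k 0 = 0 ∧ ∀ n, k (n+1) = (f n (k n)).1 :=
    ⟨fun n => Nat.rec 0 (fun m a => (f m a).1) n, rfl, fun n => rfl⟩
  have hk_mono : StrictMono k :=
    strictMono_nat_of_lt_succ (fun n => by rw [hk_succ]; exact hf1 n (k n))
  have hk_le : ∀ n, n ≤ k n := fun n => hk_mono.le_apply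
  obtain ⟨idx, hidx⟩ : ∃ idx : ℕ → ℕ, ∀ i, idx i = Nat.findGreatest (fun n => k n ≤ i) i :=
    ⟨_, fun _ => rfl⟩
  have hidx1 : ∀ i, k (idx i) ≤ i := by
    intro i
    rw [hidx]
    exact Nat.findGreatest_spec (P := fun n => k n ≤ i) (Nat.zero_le i)
      (by simp [hk0])
  have hidx2 : ∀ i, i < k (idx i + 1) := by
    intro i
    by_contra h
    push_neg at h
    have hle : idx i + 1 ≤ i := le_trans (hk_le _) h
    have hgr := Nat.findGreatest_is_greatest (P := fun n => k n ≤ i) (n := i)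
      (k := idx i + 1) (by rw [← hidx]; exact Nat.lt_succ_self _) hle
    exact hgr h
  have hidx_eq : ∀ n i, k n ≤ i → i < k (n+1) → idx i = n := by
    intro n i h1 h2
    have hub : idx i < n + 1 := hk_mono.lt_iff_lt.mp (lt_of_le_of_lt (hidx1 i) h2)
    have hlb : n ≤ idx i := by
      rw [hidx]
      exact Nat.le_findGreatest (le_trans (hk_le n) h1) h1
    omega
  obtain ⟨y, hy⟩ : ∃ y : Ω, ∀ i, y i = (f (idx i) (k (idx i))).2 i := ⟨_, fun _ => rfl⟩
  have hkey : ∀ n (x : Ω), (∀ i, k n ≤ i → i < k (n+1) → x i = y i) → x ∉ C n := by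
    intro n x hx
    apply hf2 n (k n) x
    intro i h1 h2
    rw [← hk_succ n] at h2
    have hi := hidx_eq n i h1 h2
    rw [hx i h1 h2, hy i, hi]
  -- the meager set F'
  refine ⟨{x : Ω | ∀ N, ∃ n, N ≤ n ∧ ∀ i, k (2*n) ≤ i → i < k (2*n+2) → x i = y i}ᶜ, ?_, ?_⟩
  · -- meagre
    rw [IsMeagre, compl_compl]
    have hrw : {x : Ω | ∀ N, ∃ n, N ≤ n ∧ ∀ i, k (2*n) ≤ i → i < k (2*n+2) → x i = y i}
        = ⋂ N, {x : Ω | ∃ n, N ≤ n ∧ ∀ i, k (2*n) ≤ i → i < k (2*n+2) → x i = y i} := by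
      ext v; simp
    rw [hrw]
    refine countable_iInter_mem.mpr (fun N => ?_)
    apply residual_of_dense_open
    · have : {x : Ω | ∃ n, N ≤ n ∧ ∀ i, k (2*n) ≤ i → i < k (2*n+2) → x i = y i}
          = ⋃ n, ⋃ (_ : N ≤ n), {x : Ω | ∀ i, k (2*n) ≤ i → i < k (2*n+2) → x i = y i} := by
        ext v; simp
      rw [this]
      exact isOpen_iUnion fun n => isOpen_iUnion fun _ => interval_open _ _ y
    · rw [dense_iff_inter_open]
      rintro V hV ⟨v, hv⟩
      obtain ⟨M, hM⟩ := open_prefix hV hv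
      refine ⟨fun i => if i < k (2 * max N M) then v i else y i, ?_, max N M, le_max_left _ _, ?_⟩
      · apply hM
        intro i hi
        have : i < k (2 * max N M) :=
          lt_of_lt_of_le hi (le_trans (le_trans (le_max_right N M) (by omega)) (hk_le _))
        simp [this]
      · intro i h1 h2
        simp [Nat.not_lt.mpr h1]
  · -- the covering property
    intro x₁ x₂
    refine ⟨fun i => if (idx i) % 2 = 0 then x₁ i else x₂ i, ?_⟩
    have hzmod : ∀ a : ZMod 2, a + a = 0 := by decide
    rintro w (⟨h, hh, rfl⟩ | ⟨h, hh, rfl⟩) <;> rw [compl_compl] at hh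
    · refine ⟨h + x₁ + (fun i => if (idx i) % 2 = 0 then x₁ i else x₂ i), ?_, ?_⟩
      · -- h + x₁ + x ∉ F
        intro hp
        obtain ⟨s, hsS, hps⟩ := hS_cov hp
        obtain ⟨m, rfl⟩ : ∃ m, g m = s := by
          have : s ∈ range g := hg ▸ mem_insert_of_mem _ hsS
          exact this
        obtain ⟨n, hmn, hagree⟩ := hh m
        refine hkey (2*n) _ ?_ (hg_sub m (2*n) (by omega) hps)
        intro i hi1 hi2
        have hidxi : idx i = 2*n := hidx_eq (2*n) i hi1 hi2
        have hx_eq : (if (idx i) % 2 = 0 then x₁ i else x₂ i) = x₁ i := by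
          rw [hidxi]; simp [Nat.mul_mod_right]
        have hyi : h i = y i :=
          hagree i hi1 (lt_of_lt_of_le hi2 (hk_mono.monotone (by omega)))
        simp only [Pi.add_apply]
        rw [hx_eq, add_assoc, hzmod, add_zero, hyi]
      · funext i
        simp only [Pi.add_apply]
        rw [add_assoc (h i + x₁ i), hzmod, add_zero]
    · refine ⟨h + x₂ + (fun i => if (idx i) % 2 = 0 then x₁ i else x₂ i), ?_, ?_⟩
      · intro hp
        obtain ⟨s, hsS, hps⟩ := hS_cov hp
        obtain ⟨m, rfl⟩ : ∃ m, g m = s := by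
          have : s ∈ range g := hg ▸ mem_insert_of_mem _ hsS
          exact this
        obtain ⟨n, hmn, hagree⟩ := hh m
        refine hkey (2*n+1) _ ?_ (hg_sub m (2*n+1) (by omega) hps)
        intro i hi1 hi2
        have hidxi : idx i = 2*n+1 := hidx_eq (2*n+1) i hi1 hi2
        have hx_eq : (if (idx i) % 2 = 0 then x₁ i else x₂ i) = x₂ i := by
          rw [hidxi, if_neg (by omega : ¬(2 * n + 1) % 2 = 0)]
        have hyi : h i = y i :=
          hagree i (le_trans (hk_mono.monotone (by omega)) hi1) hi2
        simp only [Pi.add_apply]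
        rw [hx_eq, add_assoc, hzmod, add_zero, hyi]
      · funext i
        simp only [Pi.add_apply]
        rw [add_assoc (h i + x₂ i), hzmod, add_zero]
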